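/- Let X be an integrable real random variable with continuous cumulative distribution function F, let p ∈ (0,1), and set VaR_p(X) = inf{x : F(x) ≥ p} and VaR_u(X) analogously for u ∈ (0,1). Then ∫_p^1 VaR_u(X) du − (1−p)·VaR_p(X) = E[(X − VaR_p(X))₊] = ∫_{VaR_p(X)}^∞ (1 − F(x)) dx; equivalently, (1−p)(ES_p(X) − VaR_p(X)) equals the stop-loss transform E[(X − VaR_p(X))₊]. -/

import Mathlib

open MeasureTheory Set
open scoped ENNReal

/-- For an integrable random variable `X` with continuous CDF `F`,
`p ∈ (0,1)`, `VaR u = inf {x : F x ≥ u}` and `ES u = (1-u)⁻¹ ∫_u^1 VaR`: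
`∫_p^1 VaR_u du - (1-p)·VaR p = E[(X - VaR p)₊] = ∫_{VaR p}^∞ (1 - F x) dx`,
and equivalently `(1-p)(ES p - VaR p)` equals the stop-loss transform. -/
theorem stop_loss_transform_identity
    {Ω : Type*} [MeasurableSpace Ω] (μ : Measure Ω) [IsProbabilityMeasure μ]
    (X : Ω → ℝ) (hX : Integrable X μ)
    (F : ℝ → ℝ) (hF : ∀ x, F x = (μ {ω | X ω ≤ x}).toReal)
    (hFc : Continuous F)
    (VaR : ℝ → ℝ) (hVaR : ∀ u, VaR u = sInf {x | u ≤ F x})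
    (ES : ℝ → ℝ) (hES : ∀ u, ES u = (1 - u)⁻¹ * ∫ v in u..1, VaR v)
    (p : ℝ) (hp : p ∈ Set.Ioo (0:ℝ) 1) :
    (∫ u in p..1, VaR u) - (1 - p) * VaR p = (∫ ω, max (X ω - VaR p) 0 ∂μ)
    ∧ (∫ ω, max (X ω - VaR p) 0 ∂μ) = (∫ x in Set.Ioi (VaR p), (1 - F x))
    ∧ (1 - p) * (ES p - VaR p) = (∫ ω, max (X ω - VaR p) 0 ∂μ) := by
  classical
  obtain ⟨hp0, hp1⟩ := hp
  set t : ℝ := VaR p with ht_def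
  -- measurable representative of X
  set X' : Ω → ℝ := hX.1.mk X with hX'def
  have hX'meas : Measurable X' := hX.1.stronglyMeasurable_mk.measurable
  have hX_ae : X =ᵐ[μ] X' := hX.1.ae_eq_mk
  have hset : ∀ x : ℝ, ({ω | X ω ≤ x} : Set Ω) =ᵐ[μ] {ω | X' ω ≤ x} := by
    intro x
    filter_upwards [hX_ae] with ω h
    exact congrArg (fun y => y ≤ x) h
  -- identify F with the cdf of the law of X'
  set ν : Measure ℝ := μ.map X' with hν_def
  haveI : IsProbabilityMeasure ν := Measure.isProbabilityMeasure_map hX'meas.aemeasurable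
  have hFx : ∀ x, F x = ProbabilityTheory.cdf ν x := by
    intro x
    rw [hF, ProbabilityTheory.cdf_eq_real, measureReal_def, hν_def,
      Measure.map_apply hX'meas measurableSet_Iic]
    congr 1
    exact measure_congr (hset x)
  have hFmono : Monotone F := by
    intro a b hab
    rw [hFx a, hFx b]; exact ProbabilityTheory.monotone_cdf ν hab
  have hF0 : ∀ x, 0 ≤ F x := fun x => (hFx x) ▸ ProbabilityTheory.cdf_nonneg ν x
  have hF1 : ∀ x, F x ≤ 1 := fun x => (hFx x) ▸ ProbabilityTheory.cdf_le_one ν x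
  have hFtop : Filter.Tendsto F Filter.atTop (nhds 1) := by
    have := ProbabilityTheory.tendsto_cdf_atTop ν
    refine this.congr fun x => (hFx x).symm
  have hFbot : Filter.Tendsto F Filter.atBot (nhds 0) := by
    have := ProbabilityTheory.tendsto_cdf_atBot ν
    refine this.congr fun x => (hFx x).symm
  -- the key Galois-connection property of the quantile function
  have key : ∀ u : ℝ, 0 < u → u < 1 →
      (u ≤ F (VaR u)) ∧ (∀ x, VaR u ≤ x ↔ u ≤ F x) := by
    intro u hu0 hu1
    have hne : {x | u ≤ F x}.Nonempty := by
      obtain ⟨x, hx⟩ := (hFtop.eventually (eventually_ge_nhds hu1)).exists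
      exact ⟨x, hx⟩
    have hbdd : BddBelow {x | u ≤ F x} := by
      obtain ⟨x₀, hx₀⟩ := (hFbot.eventually (eventually_lt_nhds hu0)).exists
      refine ⟨x₀, fun y hy => ?_⟩
      by_contra hlt
      push_neg at hlt
      exact absurd hy (not_le.mpr (lt_of_le_of_lt (hFmono hlt.le) hx₀))
    have hclosed : IsClosed {x | u ≤ F x} := isClosed_Ici.preimage hFc
    have hmem : u ≤ F (VaR u) := by
      rw [hVaR]
      exact hclosed.csInf_mem hne hbdd
    refine ⟨hmem, fun x => ⟨fun h => hmem.trans (hFmono h), fun h => ?_⟩⟩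
    rw [hVaR]
    exact csInf_le hbdd h
  have hiff : ∀ u : ℝ, 0 < u → u < 1 → ∀ x, (VaR u ≤ x ↔ u ≤ F x) :=
    fun u h0 h1 => (key u h0 h1).2
  have hFt : p ≤ F t := (hiff p hp0 hp1 t).mp le_rfl
  have ht_le : ∀ u ∈ Ioo p 1, t ≤ VaR u := by
    intro u hu
    have hu0 : 0 < u := hp0.trans hu.1
    exact (hiff p hp0 hp1 (VaR u)).mpr (le_trans hu.1.le (key u hu0 hu.2).1)
  -- set computations
  have hsetu : ∀ x ∈ Ioi t, Ioi (F x) ∩ Ioo p 1 = Ioo (F x) 1 := by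
    intro x hx
    have hpF : p ≤ F x := (hiff p hp0 hp1 x).mp (le_of_lt hx)
    ext u
    simp only [mem_inter_iff, mem_Ioi, mem_Ioo]
    constructor
    · rintro ⟨h1, _, h3⟩; exact ⟨h1, h3⟩
    · rintro ⟨h1, h2⟩; exact ⟨h1, lt_of_le_of_lt hpF h1, h2⟩
  have hsetx : ∀ u ∈ Ioo p 1, {x | F x < u} ∩ Ioi t = Ioo t (VaR u) := by
    intro u hu
    have hu0 : 0 < u := hp0.trans hu.1
    ext x
    simp only [mem_inter_iff, mem_setOf_eq, mem_Ioi, mem_Ioo]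
    constructor
    · rintro ⟨h1, h2⟩
      exact ⟨h2, not_le.mp fun h => absurd ((hiff u hu0 hu.2 x).mp h) (not_le.mpr h1)⟩
    · rintro ⟨h1, h2⟩
      exact ⟨not_le.mp fun h => absurd ((hiff u hu0 hu.2 x).mpr h) (not_le.mpr h2), h1⟩
  -- the two product sets
  set S1 : Set (ℝ × ℝ) := {q | F q.2 < q.1} with hS1def
  have hS1 : MeasurableSet S1 :=
    measurableSet_lt (hFc.measurable.comp measurable_snd) measurable_fst
  set S2 : Set (Ω × ℝ) := {q | q.2 < X' q.1} with hS2def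
  have hS2 : MeasurableSet S2 :=
    measurableSet_lt measurable_snd (hX'meas.comp measurable_fst)
  set L2 : ℝ≥0∞ := ∫⁻ x in Ioi t, ENNReal.ofReal (1 - F x) with hL2def
  -- first Tonelli: quantile side
  have h1x : ∀ u ∈ Ioo p 1,
      (∫⁻ x in Ioi t, S1.indicator 1 (u, x)) = ENNReal.ofReal (VaR u - t) := by
    intro u hu
    have hA : MeasurableSet {x : ℝ | F x < u} := measurableSet_lt hFc.measurable measurable_const
    have heq : ∀ x : ℝ, S1.indicator (1 : ℝ × ℝ → ℝ≥0∞) (u, x) = ({x : ℝ | F x < u}).indicator (1 : ℝ → ℝ≥0∞) x := by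
      intro x
      rw [hS1def]
      by_cases h : F x < u <;> simp [Set.indicator_apply, h]
    rw [lintegral_congr heq, lintegral_indicator_one hA,
      Measure.restrict_apply hA, hsetx u hu, Real.volume_Ioo]
  have h1u : ∀ x ∈ Ioi t,
      (∫⁻ u in Ioo p 1, S1.indicator 1 (u, x)) = ENNReal.ofReal (1 - F x) := by
    intro x hx
    have hA : MeasurableSet (Ioi (F x)) := measurableSet_Ioi
    have heq : ∀ u : ℝ, S1.indicator (1 : ℝ × ℝ → ℝ≥0∞) (u, x) = (Ioi (F x)).indicator (1 : ℝ → ℝ≥0∞) u := by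
      intro u
      rw [hS1def]
      by_cases h : F x < u <;> simp [Set.indicator_apply, h]
    rw [lintegral_congr heq, lintegral_indicator_one hA,
      Measure.restrict_apply hA, hsetu x hx, Real.volume_Ioo]
  have hswap1 : (∫⁻ u in Ioo p 1, ∫⁻ x in Ioi t, S1.indicator 1 (u, x))
      = ∫⁻ x in Ioi t, ∫⁻ u in Ioo p 1, S1.indicator 1 (u, x) :=
    lintegral_lintegral_swap ((measurable_one.indicator hS1).aemeasurable)
  have hL3L2 : (∫⁻ u in Ioo p 1, ENNReal.ofReal (VaR u - t)) = L2 := by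
    rw [← setLIntegral_congr_fun measurableSet_Ioo h1x,
      hswap1]
    exact setLIntegral_congr_fun measurableSet_Ioi h1u
  -- second Tonelli: expectation side
  have hcompl : ∀ x : ℝ, μ {ω | x < X' ω} = ENNReal.ofReal (1 - F x) := by
    intro x
    have hmx : MeasurableSet {ω | X' ω ≤ x} := hX'meas measurableSet_Iic
    have h1 : {ω | x < X' ω} = {ω | X' ω ≤ x}ᶜ := by
      ext ω; simp [not_le]
    have h2 : μ {ω | X' ω ≤ x} = ENNReal.ofReal (F x) := by
      rw [hF, ← measure_congr (hset x)]
      exact (ENNReal.ofReal_toReal (measure_ne_top μ _)).symm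
    rw [h1, measure_compl hmx (measure_ne_top μ _), measure_univ, h2,
      ENNReal.ofReal_sub 1 (hF0 x), ENNReal.ofReal_one]
  have h2ω : ∀ ω : Ω,
      (∫⁻ x in Ioi t, S2.indicator 1 (ω, x)) = ENNReal.ofReal (X' ω - t) := by
    intro ω
    have hA : MeasurableSet (Iio (X' ω)) := measurableSet_Iio
    have heq : ∀ x : ℝ, S2.indicator (1 : Ω × ℝ → ℝ≥0∞) (ω, x) = (Iio (X' ω)).indicator (1 : ℝ → ℝ≥0∞) x := by
      intro x
      rw [hS2def]
      by_cases h : x < X' ω <;> simp [Set.indicator_apply, h]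
    rw [lintegral_congr heq, lintegral_indicator_one hA,
      Measure.restrict_apply hA, Set.Iio_inter_Ioi, Real.volume_Ioo]
  have h2x : ∀ x ∈ Ioi t,
      (∫⁻ ω, S2.indicator 1 (ω, x) ∂μ) = ENNReal.ofReal (1 - F x) := by
    intro x _
    have hA : MeasurableSet {ω | x < X' ω} :=
      measurableSet_lt measurable_const hX'meas
    have heq : ∀ ω : Ω, S2.indicator (1 : Ω × ℝ → ℝ≥0∞) (ω, x) = ({ω | x < X' ω}).indicator (1 : Ω → ℝ≥0∞) ω := by
      intro ω
      rw [hS2def]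
      by_cases h : x < X' ω <;> simp [Set.indicator_apply, h]
    rw [lintegral_congr heq, lintegral_indicator_one hA, hcompl x]
  have hofReal_max : ∀ y : ℝ, ENNReal.ofReal (max y 0) = ENNReal.ofReal y := by
    intro y
    rcases le_total y 0 with h | h
    · rw [max_eq_right h, ENNReal.ofReal_zero, eq_comm, ENNReal.ofReal_eq_zero]
      exact h
    · rw [max_eq_left h]
  have hswap2 : (∫⁻ ω, ∫⁻ x in Ioi t, S2.indicator 1 (ω, x) ∂(volume) ∂μ)
      = ∫⁻ x in Ioi t, ∫⁻ ω, S2.indicator 1 (ω, x) ∂μ :=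
    lintegral_lintegral_swap ((measurable_one.indicator hS2).aemeasurable)
  have hL1L2 : (∫⁻ ω, ENNReal.ofReal (max (X ω - t) 0) ∂μ) = L2 := by
    have step1 : (∫⁻ ω, ENNReal.ofReal (max (X ω - t) 0) ∂μ)
        = ∫⁻ ω, ENNReal.ofReal (X' ω - t) ∂μ := by
      refine lintegral_congr_ae ?_
      filter_upwards [hX_ae] with ω h
      rw [hofReal_max, h]
    rw [step1, lintegral_congr fun ω => (h2ω ω).symm, hswap2]
    exact setLIntegral_congr_fun measurableSet_Ioi h2x
  -- integrability / finiteness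
  have hmax_int : Integrable (fun ω => max (X ω - t) 0) μ :=
    (hX.sub (integrable_const t)).pos_part
  have hL1fin : (∫⁻ ω, ENNReal.ofReal (max (X ω - t) 0) ∂μ) < ⊤ := by
    refine lt_of_le_of_lt (lintegral_mono fun ω => Real.ofReal_le_enorm _) ?_
    exact hmax_int.2
  have hL2fin : L2 ≠ ⊤ := by
    rw [← hL1L2]; exact hL1fin.ne
  -- Bochner conversions
  have hE : (∫ ω, max (X ω - t) 0 ∂μ) = L2.toReal := by
    rw [integral_eq_lintegral_of_nonneg_ae
      (Filter.Eventually.of_forall fun ω => le_max_right (X ω - t) (0:ℝ)) hmax_int.1, hL1L2]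
  have hTail : (∫ x in Ioi t, (1 - F x)) = L2.toReal := by
    rw [integral_eq_lintegral_of_nonneg_ae
      (Filter.Eventually.of_forall fun x => sub_nonneg.mpr (hF1 x))
      ((continuous_const.sub hFc).aestronglyMeasurable)]
  -- measurability of VaR on (p, 1)
  set V2 : ℝ → ℝ := (Ioo p 1).piecewise VaR (fun _ => t) with hV2def
  have hV2meas : Measurable V2 := by
    refine measurable_of_Ioi fun a => ?_
    have hpre : V2 ⁻¹' Ioi a
        = (Ioi (F a) ∩ Ioo p 1) ∪ ((fun _ : ℝ => t) ⁻¹' Ioi a \ Ioo p 1) := by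
      ext u
      by_cases hu : u ∈ Ioo p 1
      · have hu0 : 0 < u := hp0.trans hu.1
        have : a < VaR u ↔ F a < u := by
          rw [← not_le, ← not_le]
          exact not_congr (hiff u hu0 hu.2 a)
        simp [hV2def, Set.piecewise, hu, mem_preimage, this]
      · simp [hV2def, Set.piecewise, hu, mem_preimage]
    rw [hpre]
    exact (measurableSet_Ioi.inter measurableSet_Ioo).union
      ((measurable_const measurableSet_Ioi).diff measurableSet_Ioo)
  have hVaRaem : AEStronglyMeasurable VaR (volume.restrict (Ioo p 1)) :=
    ⟨V2, hV2meas.stronglyMeasurable,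
      (piecewise_ae_eq_restrict measurableSet_Ioo).symm⟩
  have h_nonneg_ae : 0 ≤ᵐ[volume.restrict (Ioo p 1)] fun u => VaR u - t :=
    (ae_restrict_iff' measurableSet_Ioo).mpr
      (Filter.Eventually.of_forall fun u hu => sub_nonneg.mpr (ht_le u hu))
  have hint : Integrable (fun u => VaR u - t) (volume.restrict (Ioo p 1)) := by
    refine ⟨hVaRaem.sub aestronglyMeasurable_const, ?_⟩
    rw [hasFiniteIntegral_iff_ofReal h_nonneg_ae, hL3L2]
    exact hL2fin.lt_top
  have hquant : (∫ u in Ioo p 1, (VaR u - t)) = L2.toReal := by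
    rw [integral_eq_lintegral_of_nonneg_ae h_nonneg_ae hint.1, hL3L2]
  -- assembling the interval integral
  have hconst_int : IntegrableOn (fun _ : ℝ => t) (Ioo p 1) volume := by
    exact integrableOn_const (by rw [Real.volume_Ioo]; exact ENNReal.ofReal_ne_top)
  have hsplit : (∫ u in p..1, VaR u) = L2.toReal + (1 - p) * t := by
    rw [intervalIntegral.integral_of_le hp1.le, integral_Ioc_eq_integral_Ioo]
    have : (∫ u in Ioo p 1, VaR u) = ∫ u in Ioo p 1, ((VaR u - t) + t) := by
      congr 1; ext u; ring
    rw [this, integral_add hint hconst_int, hquant, setIntegral_const,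
      measureReal_def, Real.volume_Ioo, ENNReal.toReal_ofReal (by linarith), smul_eq_mul]
  have h1p : (1 : ℝ) - p ≠ 0 := by linarith
  refine ⟨?_, ?_, ?_⟩
  · rw [hE, hsplit]; ring
  · rw [hE, hTail]
  · rw [hES p, hE, hsplit]
    field_simp
    ring
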